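/- No matrix of the form A = α R_I Γ_ε, with ε ∈ {−1,1}^N, α > 0 a scaling, and R_I restriction to a subset I ⊆ [N], can satisfy RIP₁,₂(4, δ) with δ < 1/40, provided the hard-thresholding recovery guarantee holds: if A satisfies RIP₁,₂(2s, δ) then every s-sparse unit vector x satisfies ‖x − H_s(A* sign(Ax))‖₂ ≤ 2√(5δ). -/

import Mathlib

open Finset Matrix

/-- No subsampled and rescaled Bernoulli circulant matrix `A = α R_I Γ_ε` can satisfy
`RIP₁,₂(4, δ)` with `δ < 1/40`, given the hard-thresholding recovery guarantee: if `A`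
satisfies `RIP₁,₂(4, δ)` then every `2`-sparse unit vector `x` satisfies
`‖x − H₂(A* sign(Ax))‖₂ ≤ 2√(5δ)` (the reconstruction map `H` being the
hard-thresholding operator `H₂`). -/
theorem bernoulli_circulant_no_rip (n m : ℕ) (ε : Fin (n + 2) → ℝ)
    (hε : ∀ i, ε i = 1 ∨ ε i = -1) (α : ℝ) (hα : 0 < α)
    (I : Fin m → Fin (n + 2)) (δ : ℝ) (hδ0 : 0 ≤ δ) (hδ : δ < 1 / 40)
    (A : Matrix (Fin m) (Fin (n + 2)) ℝ)
    (hA : A = α • Matrix.of fun i j => ε (I i - j))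
    (H : (Fin (n + 2) → ℝ) → (Fin (n + 2) → ℝ))
    (hHT : (∀ x : Fin (n + 2) → ℝ,
        (Finset.univ.filter fun i => x i ≠ 0).card ≤ 4 →
        (1 - δ) * Real.sqrt (∑ i, x i ^ 2) ≤ ∑ i, |(A *ᵥ x) i| ∧
        ∑ i, |(A *ᵥ x) i| ≤ (1 + δ) * Real.sqrt (∑ i, x i ^ 2)) →
      ∀ x : Fin (n + 2) → ℝ,
        (Finset.univ.filter fun i => x i ≠ 0).card ≤ 2 →
        Real.sqrt (∑ i, x i ^ 2) = 1 →
        Real.sqrt (∑ i,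
            (x i - H (Aᵀ *ᵥ fun k => Real.sign ((A *ᵥ x) k)) i) ^ 2)
          ≤ 2 * Real.sqrt (5 * δ)) :
    ¬ (∀ x : Fin (n + 2) → ℝ,
        (Finset.univ.filter fun i => x i ≠ 0).card ≤ 4 →
        (1 - δ) * Real.sqrt (∑ i, x i ^ 2) ≤ ∑ i, |(A *ᵥ x) i| ∧
        ∑ i, |(A *ᵥ x) i| ≤ (1 + δ) * Real.sqrt (∑ i, x i ^ 2)) := by
  intro hRIP
  have hrec := hHT hRIP
  -- parameters
  set t : ℝ := 80 * δ with ht_def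
  have ht0 : 0 ≤ t := by positivity
  have ht2 : t < 2 := by rw [ht_def]; linarith
  have h4t : (0:ℝ) < 4 - t := by linarith
  set u : ℝ := (t / (4 - t) + 1) / 2 with hu_def
  have hfrac0 : 0 ≤ t / (4 - t) := div_nonneg ht0 h4t.le
  have hfrac1 : t / (4 - t) < 1 := (div_lt_one h4t).2 (by linarith)
  have hu0 : 0 < u := by rw [hu_def]; linarith
  have hu1 : u < 1 := by rw [hu_def]; linarith
  have h1 : t / (4 - t) < u := by rw [hu_def]; linarith
  have h2 : t < u * (4 - t) := (div_lt_iff₀ h4t).1 h1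
  have hukey : t * (1 + u) < 4 * u := by nlinarith
  set lam : ℝ := Real.sqrt u with hlam_def
  have hlam0 : 0 < lam := Real.sqrt_pos.2 hu0
  have hlam2 : lam ^ 2 = u := Real.sq_sqrt hu0.le
  have hlam1 : lam < 1 := by
    have := Real.sqrt_lt_sqrt hu0.le hu1
    rwa [Real.sqrt_one] at this
  set c : ℝ := 1 / Real.sqrt (1 + u) with hc_def
  have h1u : (0:ℝ) < 1 + u := by linarith
  have hc0 : 0 < c := by
    rw [hc_def]; positivity
  have hc2 : c ^ 2 = 1 / (1 + u) := by
    rw [hc_def, div_pow, one_pow, Real.sq_sqrt h1u.le]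
  -- the two test vectors
  set x : ℝ → (Fin (n + 2) → ℝ) := fun s j => if j = 0 then c else if j = 1 then s * lam * c else 0
    with hx_def
  have h01 : (0 : Fin (n + 2)) ≠ 1 := by simp [Fin.ext_iff]
  -- summing a function supported on {0,1}
  have key : ∀ g : Fin (n + 2) → ℝ, (∀ i, i ≠ 0 → i ≠ 1 → g i = 0) →
      ∑ i, g i = g 0 + g 1 := by
    intro g hg
    rw [← Finset.sum_subset (Finset.subset_univ ({0, 1} : Finset (Fin (n + 2))))
      (by intro i _ hi; simp only [Finset.mem_insert, Finset.mem_singleton, not_or] at hi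
          exact hg i hi.1 hi.2)]
    exact Finset.sum_pair h01
  -- sparsity
  have hsparse : ∀ s, (Finset.univ.filter fun i => x s i ≠ 0).card ≤ 2 := by
    intro s
    have hsub : (Finset.univ.filter fun i => x s i ≠ 0) ⊆ ({0, 1} : Finset (Fin (n + 2))) := by
      intro i hi
      simp only [Finset.mem_filter, hx_def] at hi
      by_contra hmem
      simp only [Finset.mem_insert, Finset.mem_singleton, not_or] at hmem
      exact hi.2 (by simp [hmem.1, hmem.2])
    calc (Finset.univ.filter fun i => x s i ≠ 0).card ≤ ({0,1} : Finset (Fin (n+2))).card :=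
          Finset.card_le_card hsub
      _ ≤ 2 := by
          have := Finset.card_insert_le (0 : Fin (n+2)) ({1} : Finset (Fin (n+2)))
          simpa using this
  -- unit norm
  have hnorm : ∀ s : ℝ, s ^ 2 = 1 → Real.sqrt (∑ i, x s i ^ 2) = 1 := by
    intro s hs
    have hsum : ∑ i, x s i ^ 2 = 1 := by
      rw [key (fun i => x s i ^ 2) (by intro i h0 h1; simp [hx_def, h0, h1])]
      have e0 : x s 0 = c := by simp [hx_def]
      have e1 : x s 1 = s * lam * c := by simp [hx_def, h01.symm]
      have hsl : (s * lam * c) ^ 2 = u * c ^ 2 := by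
        have h' : (s * lam * c) ^ 2 = s ^ 2 * lam ^ 2 * c ^ 2 := by ring
        rw [h', hs, hlam2]; ring
      have hne : (1 + u) ≠ 0 := ne_of_gt h1u
      rw [e0, e1, hsl, hc2]
      field_simp
    rw [hsum, Real.sqrt_one]
  -- mulVec formula
  have hmv : ∀ s : ℝ, ∀ k, (A *ᵥ x s) k = α * c * (ε (I k) + s * lam * ε (I k - 1)) := by
    intro s k
    have : (A *ᵥ x s) k = ∑ j, A k j * x s j := rfl
    rw [this, key (fun j => A k j * x s j) (by intro i h0 h1; simp [hx_def, h0, h1])]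
    have e0 : x s 0 = c := by simp [hx_def]
    have e1 : x s 1 = s * lam * c := by simp [hx_def, h01.symm]
    rw [e0, e1, hA]
    simp only [Matrix.smul_apply, Matrix.of_apply, smul_eq_mul, sub_zero]
    ring
  -- sign of A x s
  have hsign : ∀ s : ℝ, s = 1 ∨ s = -1 →
      ∀ k, Real.sign ((A *ᵥ x s) k) = ε (I k) := by
    intro s hs k
    rw [hmv]
    have hac : 0 < α * c := mul_pos hα hc0
    have hv : |s * lam * ε (I k - 1)| = lam := by
      rw [abs_mul, abs_mul]
      rcases hs with hs | hs <;> rcases hε (I k - 1) with hf | hf <;>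
        rw [hs, hf] <;> simp [abs_of_pos hlam0]
    have hvlt : |s * lam * ε (I k - 1)| < 1 := by rw [hv]; exact hlam1
    rcases abs_lt.1 hvlt with ⟨hv1, hv2⟩
    rcases hε (I k) with he | he <;> rw [he]
    · exact Real.sign_of_pos (mul_pos hac (by linarith))
    · exact Real.sign_of_neg (mul_neg_of_pos_of_neg hac (by linarith))
  have hsign_eq : (fun k => Real.sign ((A *ᵥ x (-1)) k)) = fun k => Real.sign ((A *ᵥ x 1) k) := by
    funext k
    rw [hsign 1 (Or.inl rfl) k, hsign (-1) (Or.inr rfl) k]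
  -- the recovered vector
  set g : Fin (n + 2) → ℝ := H (Aᵀ *ᵥ fun k => Real.sign ((A *ᵥ x 1) k)) with hg_def
  have hr1 : Real.sqrt (∑ i, (x 1 i - g i) ^ 2) ≤ 2 * Real.sqrt (5 * δ) :=
    hrec (x 1) (hsparse 1) (hnorm 1 (by norm_num))
  have hr2 : Real.sqrt (∑ i, (x (-1) i - g i) ^ 2) ≤ 2 * Real.sqrt (5 * δ) := by
    have := hrec (x (-1)) (hsparse (-1)) (hnorm (-1) (by norm_num))
    rwa [hsign_eq] at this
  -- triangle inequality in Euclidean space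
  have tri : ∀ p q r : EuclideanSpace ℝ (Fin (n + 2)),
      Real.sqrt (∑ i, (p i - r i) ^ 2) ≤
        Real.sqrt (∑ i, (p i - q i) ^ 2) + Real.sqrt (∑ i, (q i - r i) ^ 2) := by
    intro p q r
    have h := dist_triangle p q r
    simpa [EuclideanSpace.dist_eq, Real.dist_eq, sq_abs] using h
  have htri := tri (WithLp.toLp 2 (x 1)) (WithLp.toLp 2 g) (WithLp.toLp 2 (x (-1)))
  have hmain : Real.sqrt (∑ i, (x 1 i - x (-1) i) ^ 2) ≤ 4 * Real.sqrt (5 * δ) := by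
    calc Real.sqrt (∑ i, (x 1 i - x (-1) i) ^ 2)
        ≤ Real.sqrt (∑ i, (x 1 i - g i) ^ 2) + Real.sqrt (∑ i, (g i - x (-1) i) ^ 2) := htri
      _ ≤ 2 * Real.sqrt (5 * δ) + 2 * Real.sqrt (5 * δ) := by
          have : ∀ i, (g i - x (-1) i) ^ 2 = (x (-1) i - g i) ^ 2 := by
            intro i; ring
          rw [Finset.sum_congr rfl fun i _ => this i]
          exact add_le_add hr1 hr2
      _ = 4 * Real.sqrt (5 * δ) := by ring
  -- compute the left side
  have hlhs : ∑ i, (x 1 i - x (-1) i) ^ 2 = (2 * lam * c) ^ 2 := by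
    rw [key (fun i => (x 1 i - x (-1) i) ^ 2) (by intro i h0 h1; simp [hx_def, h0, h1])]
    have e0 : (x 1 0 - x (-1) 0) = 0 := by simp [hx_def]
    have e1 : (x 1 1 - x (-1) 1) = 2 * lam * c := by
      have a1 : x 1 1 = 1 * lam * c := by simp [hx_def, h01.symm]
      have a2 : x (-1) 1 = (-1) * lam * c := by simp [hx_def, h01.symm]
      rw [a1, a2]; ring
    rw [e0, e1]
    ring
  rw [hlhs, Real.sqrt_sq (by positivity)] at hmain
  -- square and derive the contradiction
  have hsq : (2 * lam * c) ^ 2 ≤ (4 * Real.sqrt (5 * δ)) ^ 2 := by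
    have h0 : 0 ≤ 2 * lam * c := by positivity
    nlinarith [hmain, h0]
  have hrq : (4 * Real.sqrt (5 * δ)) ^ 2 = t := by
    rw [mul_pow, Real.sq_sqrt (by positivity : (0:ℝ) ≤ 5 * δ), ht_def]
    ring
  rw [hrq] at hsq
  have hlq : (2 * lam * c) ^ 2 = 4 * u / (1 + u) := by
    rw [mul_pow, mul_pow, hlam2, hc2]
    ring
  rw [hlq] at hsq
  have : 4 * u ≤ t * (1 + u) := by
    have := (div_le_iff₀ h1u).1 hsq
    linarith
  linarith
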